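/- arXiv:2309.03772 — 5 statements merged into one kernel-verified Lean document; each statement's English description precedes it below -/
import Mathlib

section
/- Let S ∈ ℚ^{r×n} have rank r and let I be the r×r identity matrix. Then all minors of S of every size 1 ≤ m ≤ r are non-zero if and only if every r×r minor of the block matrix (I, S) is non-zero. -/
open Matrix

private lemma key_det {r n : ℕ} (S : Matrix (Fin r) (Fin n) ℚ) {α β : Type}
    [Fintype α] [Fintype β] [DecidableEq α] [DecidableEq β]
    (e : α ⊕ β ≃ Fin r) (g : β → Fin n) :
    ((Matrix.fromCols (1 : Matrix (Fin r) (Fin r) ℚ) S).submatrix id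
      (Sum.elim (Sum.inl ∘ e ∘ Sum.inl) (Sum.inr ∘ g) ∘ e.symm)).det
      = (S.submatrix (fun b => e (Sum.inr b)) g).det := by
  rw [← Matrix.det_submatrix_equiv_self e]
  have h1 : ((Matrix.fromCols (1 : Matrix (Fin r) (Fin r) ℚ) S).submatrix id
      (Sum.elim (Sum.inl ∘ e ∘ Sum.inl) (Sum.inr ∘ g) ∘ e.symm)).submatrix e e
      = Matrix.fromBlocks 1 (Matrix.of fun a b => S (e (Sum.inl a)) (g b)) 0
          (S.submatrix (fun b => e (Sum.inr b)) g) := by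
    ext x y
    cases x <;> cases y <;>
      simp [Matrix.one_apply, e.injective.eq_iff]
  rw [h1, Matrix.det_fromBlocks_zero₂₁, Matrix.det_one, one_mul]

private lemma key_inj {r n : ℕ} {α β : Type} (e : α ⊕ β ≃ Fin r) {g : β → Fin n}
    (hg : Function.Injective g) :
    Function.Injective
      (Sum.elim (Sum.inl ∘ e ∘ Sum.inl) (Sum.inr ∘ g) ∘ e.symm :
        Fin r → Fin r ⊕ Fin n) := by
  refine Function.Injective.comp ?_ e.symm.injective
  intro x y hxy
  cases x <;> cases y <;>
    simp only [Sum.elim_inl, Sum.elim_inr, Function.comp_apply, Sum.inl.injEq,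
      Sum.inr.injEq, e.injective.eq_iff, hg.eq_iff, reduceCtorEq] at hxy <;>
    simp [hxy]

/-- A rank-`r` rational matrix `S` is totally generic (all its `m × m` minors, for
`1 ≤ m ≤ r`, are non-zero) if and only if the block matrix
`(I, S)` is generic (all its `r × r` minors are non-zero). -/
theorem totally_generic_iff_block_generic (r n : ℕ)
    (S : Matrix (Fin r) (Fin n) ℚ) (hrank : S.rank = r) :
    (∀ m : ℕ, 1 ≤ m → m ≤ r → ∀ (f : Fin m → Fin r) (g : Fin m → Fin n),
        Function.Injective f → Function.Injective g →
        (S.submatrix f g).det ≠ 0) ↔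
    (∀ h : Fin r → (Fin r ⊕ Fin n), Function.Injective h →
        (((Matrix.fromCols (1 : Matrix (Fin r) (Fin r) ℚ) S).submatrix id h)).det ≠ 0) := by
  classical
  constructor
  · -- totally generic → block generic
    intro hyp h hinj
    set p : Fin r → Prop := fun j => (h j).isLeft = true with hp
    let σ : {j // p j} ⊕ {j // ¬ p j} ≃ Fin r := Equiv.sumCompl p
    have hleft : ∀ a : {j // p j}, (h a.val).isLeft := fun a => a.prop
    have hright : ∀ b : {j // ¬ p j}, (h b.val).isRight := by
      intro b
      have := b.prop
      simpa [hp, Sum.not_isLeft] using this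
    let ℓ : {j // p j} → Fin r := fun a => (h a.val).getLeft (hleft a)
    let g : {j // ¬ p j} → Fin n := fun b => (h b.val).getRight (hright b)
    have hℓ : ∀ a, h a.val = Sum.inl (ℓ a) := fun a => (Sum.inl_getLeft _ (hleft a)).symm
    have hgv : ∀ b, h b.val = Sum.inr (g b) := fun b => (Sum.inr_getRight _ (hright b)).symm
    have hℓinj : Function.Injective ℓ := by
      intro a a' haa'
      apply Subtype.ext
      apply hinj
      rw [hℓ, hℓ, haa']
    have hginj : Function.Injective g := by
      intro b b' hbb'
      apply Subtype.ext
      apply hinj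
      rw [hgv, hgv, hbb']
    have hcard : Fintype.card {j // ¬ p j} =
        Fintype.card {x : Fin r // ¬ x ∈ Set.range ℓ} := by
      rw [Fintype.card_subtype_compl, Fintype.card_subtype_compl,
        Fintype.card_congr (Equiv.ofInjective ℓ hℓinj).symm]
    let e : {j // p j} ⊕ {j // ¬ p j} ≃ Fin r :=
      (Equiv.sumCongr (Equiv.ofInjective ℓ hℓinj) (Fintype.equivOfCardEq hcard)).trans
        (Equiv.sumCompl (· ∈ Set.range ℓ))
    have he_inl : ∀ a, e (Sum.inl a) = ℓ a := fun a => rfl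
    let φ : Equiv.Perm (Fin r) := e.symm.trans σ
    have hcomp : (Sum.elim (Sum.inl ∘ e ∘ Sum.inl) (Sum.inr ∘ g) ∘ e.symm :
        Fin r → Fin r ⊕ Fin n) = h ∘ φ := by
      funext j
      show Sum.elim (Sum.inl ∘ e ∘ Sum.inl) (Sum.inr ∘ g) (e.symm j) = h (σ (e.symm j))
      rcases hx : e.symm j with a | b
      · simp [he_inl a, ← hℓ a, σ]
      · simp [← hgv b, σ]
    -- the minor is nonzero
    have hminor : (S.submatrix (fun b => e (Sum.inr b)) g).det ≠ 0 := by
      by_cases hne : Nonempty {j // ¬ p j}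
      · set m := Fintype.card {j // ¬ p j} with hm
        let ε : Fin m ≃ {j // ¬ p j} := (Fintype.equivFin _).symm
        rw [← Matrix.det_submatrix_equiv_self ε]
        have : (S.submatrix (fun b => e (Sum.inr b)) g).submatrix ε ε
            = S.submatrix ((fun b => e (Sum.inr b)) ∘ ε) (g ∘ ε) := rfl
        rw [this]
        apply hyp m
        · have : 0 < m := Fintype.card_pos
          omega
        · have := Fintype.card_subtype_le p
          have h3 : Fintype.card {j // ¬ p j} = Fintype.card (Fin r) - Fintype.card {j // p j} :=
            Fintype.card_subtype_compl p
          simp only [Fintype.card_fin] at *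
          omega
        · exact (e.injective.comp Sum.inr_injective).comp ε.injective
        · exact hginj.comp ε.injective
      · haveI : IsEmpty {j // ¬ p j} := not_nonempty_iff.mp hne
        simp [Matrix.det_isEmpty]
    have hdet : ((Matrix.fromCols (1 : Matrix (Fin r) (Fin r) ℚ) S).submatrix id
        (Sum.elim (Sum.inl ∘ e ∘ Sum.inl) (Sum.inr ∘ g) ∘ e.symm)).det
        = Equiv.Perm.sign φ *
          ((Matrix.fromCols (1 : Matrix (Fin r) (Fin r) ℚ) S).submatrix id h).det := by
      rw [hcomp]
      have : (Matrix.fromCols (1 : Matrix (Fin r) (Fin r) ℚ) S).submatrix id (h ∘ φ)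
          = ((Matrix.fromCols (1 : Matrix (Fin r) (Fin r) ℚ) S).submatrix id h).submatrix
              id φ := rfl
      rw [this, Matrix.det_permute']
    rw [← key_det S e g, hdet] at hminor
    intro hzero
    rw [hzero, mul_zero] at hminor
    exact hminor rfl
  · -- block generic → totally generic
    intro hyp m hm1 hmr f g hf hg
    let e : {x : Fin r // ¬ x ∈ Set.range f} ⊕ Fin m ≃ Fin r :=
      ((Equiv.refl _).sumCongr (Equiv.ofInjective f hf)).trans
        ((Equiv.sumComm _ _).trans (Equiv.sumCompl (· ∈ Set.range f)))
    have he_inr : ∀ i, e (Sum.inr i) = f i := fun i => rfl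
    have hkey := key_det S e g
    have hh := hyp _ (key_inj e hg)
    rw [hkey] at hh
    have hfe : (fun b => e (Sum.inr b)) = f := funext he_inr
    rwa [hfe] at hh
end

section
/- Let s ≥ 0 and Δ = 12s+8. Consider the set of columns (0,1), (1,k) for 0 ≤ k ≤ 7s+5, (2,k) for 4s+3 ≤ k ≤ 10s+7 with k odd, and (3,k) for 9s+7 ≤ k ≤ 12s+8 with 3 ∤ k. Then every 2×2 determinant formed from two distinct such columns is non-zero and has absolute value at most Δ, and the total number of columns is Δ + 4. -/
open Finset

private lemma count_odd (s : ℕ) :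
    ((Finset.Icc (4*(s:ℤ)+3) (10*s+7)).filter (fun k => Odd k)).card = 3*s+3 := by
  have himg : ((Finset.Icc (4*(s:ℤ)+3) (10*s+7)).filter (fun k => Odd k))
      = (Finset.Icc (0:ℤ) (3*s+2)).image (fun m : ℤ => 4*(s:ℤ)+3+2*m) := by
    ext k
    simp only [mem_filter, mem_Icc, mem_image, Int.odd_iff]
    constructor
    · rintro ⟨⟨h1, h2⟩, h3⟩
      exact ⟨(k - (4*s+3))/2, by omega, by omega⟩
    · rintro ⟨m, ⟨hm1, hm2⟩, rfl⟩
      omega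
  rw [himg, Finset.card_image_of_injective _ (fun a b h => by omega), Int.card_Icc]
  omega

private lemma count_nondvd (s : ℕ) :
    ((Finset.Icc (9*(s:ℤ)+7) (12*s+8)).filter (fun k => ¬ (3 ∣ k))).card = 2*s+2 := by
  have himg : ((Finset.Icc (9*(s:ℤ)+7) (12*s+8)).filter (fun k => ¬ (3 ∣ k)))
      = (Finset.Icc (0:ℤ) (2*s+1)).image (fun m : ℤ => 9*(s:ℤ)+7+3*(m/2)+m%2) := by
    ext k
    simp only [mem_filter, mem_Icc, mem_image]
    constructor
    · rintro ⟨⟨h1, h2⟩, h3⟩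
      exact ⟨2*((k-(9*s+7))/3) + (k-(9*s+7))%3, by omega, by omega⟩
    · rintro ⟨m, ⟨hm1, hm2⟩, rfl⟩
      omega
  rw [himg, Finset.card_image_of_injective _ (fun a b h => by omega), Int.card_Icc]
  omega

/-- For `Δ = 12s+8`, the set of columns `(0,1)`, `(1,k)` for `0 ≤ k ≤ 7s+5`,
`(2,k)` for `4s+3 ≤ k ≤ 10s+7` odd, and `(3,k)` for `9s+7 ≤ k ≤ 12s+8` with `3 ∤ k`,
has `Δ + 4` elements and all pairwise `2 × 2` determinants are non-zero with absolute
value at most `Δ`. -/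
theorem construction_12s_plus_8 (s : ℕ) (Δ : ℤ) (hΔ : Δ = 12 * (s : ℤ) + 8)
    (A : Set (ℤ × ℤ))
    (hA : A = {q : ℤ × ℤ | q = (0, 1) ∨
      (q.1 = 1 ∧ 0 ≤ q.2 ∧ q.2 ≤ 7 * (s : ℤ) + 5) ∨
      (q.1 = 2 ∧ 4 * (s : ℤ) + 3 ≤ q.2 ∧ q.2 ≤ 10 * (s : ℤ) + 7 ∧ Odd q.2) ∨
      (q.1 = 3 ∧ 9 * (s : ℤ) + 7 ≤ q.2 ∧ q.2 ≤ 12 * (s : ℤ) + 8 ∧ ¬ (3 ∣ q.2))}) :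
    (∀ u ∈ A, ∀ v ∈ A, u ≠ v →
        u.1 * v.2 - u.2 * v.1 ≠ 0 ∧ |u.1 * v.2 - u.2 * v.1| ≤ Δ) ∧
    (A.ncard : ℤ) = Δ + 4 := by
  subst hΔ
  classical
  constructor
  · rintro ⟨a, j⟩ hu ⟨b, k⟩ hv huv
    rw [hA] at hu hv
    simp only [Set.mem_setOf_eq, Prod.mk.injEq, Ne] at hu hv huv ⊢
    rcases hu with ⟨rfl, rfl⟩ | ⟨rfl, h2, h3⟩ | ⟨rfl, h2, h3, ⟨m, rfl⟩⟩ | ⟨rfl, h2, h3, h4⟩ <;>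
      rcases hv with ⟨rfl, rfl⟩ | ⟨rfl, h2', h3'⟩ | ⟨rfl, h2', h3', ⟨m', rfl⟩⟩ |
        ⟨rfl, h2', h3', h4'⟩ <;>
      refine ⟨?_, abs_le.mpr ⟨?_, ?_⟩⟩ <;> omega
  · -- cardinality
    set S1 : Finset (ℤ × ℤ) := (Finset.Icc (0:ℤ) (7*s+5)).image (fun k => ((1:ℤ), k)) with hS1
    set S2 : Finset (ℤ × ℤ) :=
      ((Finset.Icc (4*(s:ℤ)+3) (10*s+7)).filter (fun k => Odd k)).image (fun k => ((2:ℤ), k))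
      with hS2
    set S3 : Finset (ℤ × ℤ) :=
      ((Finset.Icc (9*(s:ℤ)+7) (12*s+8)).filter (fun k => ¬ (3 ∣ k))).image (fun k => ((3:ℤ), k))
      with hS3
    set F : Finset (ℤ × ℤ) := {((0:ℤ), (1:ℤ))} ∪ S1 ∪ S2 ∪ S3 with hF
    have hAF : A = ↑F := by
      rw [hA, hF, hS1, hS2, hS3]
      ext ⟨a, j⟩
      simp only [Set.mem_setOf_eq, Finset.coe_union, Set.mem_union, Finset.coe_singleton,
        Set.mem_singleton_iff, Finset.coe_image, Set.mem_image, Finset.mem_coe, mem_filter,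
        mem_Icc, Prod.mk.injEq]
      constructor
      · rintro (⟨rfl, rfl⟩ | ⟨rfl, h2, h3⟩ | ⟨rfl, h2, h3, h4⟩ | ⟨rfl, h2, h3, h4⟩)
        · exact Or.inl (Or.inl (Or.inl ⟨rfl, rfl⟩))
        · exact Or.inl (Or.inl (Or.inr ⟨j, ⟨h2, h3⟩, rfl, rfl⟩))
        · exact Or.inl (Or.inr ⟨j, ⟨⟨h2, h3⟩, h4⟩, rfl, rfl⟩)
        · exact Or.inr ⟨j, ⟨⟨h2, h3⟩, h4⟩, rfl, rfl⟩
      · rintro ((((⟨rfl, rfl⟩ | ⟨k, hk, rfl, rfl⟩) | ⟨k, hk, rfl, rfl⟩) | ⟨k, hk, rfl, rfl⟩))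
        · exact Or.inl ⟨rfl, rfl⟩
        · exact Or.inr (Or.inl ⟨rfl, hk.1, hk.2⟩)
        · exact Or.inr (Or.inr (Or.inl ⟨rfl, hk.1.1, hk.1.2, hk.2⟩))
        · exact Or.inr (Or.inr (Or.inr ⟨rfl, hk.1.1, hk.1.2, hk.2⟩))
    rw [hAF, Set.ncard_coe_finset]
    have inj1 : Function.Injective (fun k : ℤ => ((1:ℤ), k)) := fun a b h => by
      simpa using h
    have inj2 : Function.Injective (fun k : ℤ => ((2:ℤ), k)) := fun a b h => by
      simpa using h
    have inj3 : Function.Injective (fun k : ℤ => ((3:ℤ), k)) := fun a b h => by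
      simpa using h
    have c1 : S1.card = 7*s+6 := by
      rw [hS1, Finset.card_image_of_injective _ inj1, Int.card_Icc]; omega
    have c2 : S2.card = 3*s+3 := by
      rw [hS2, Finset.card_image_of_injective _ inj2, count_odd]
    have c3 : S3.card = 2*s+2 := by
      rw [hS3, Finset.card_image_of_injective _ inj3, count_nondvd]
    have d01 : Disjoint ({((0:ℤ), (1:ℤ))} : Finset (ℤ × ℤ)) S1 := by
      rw [Finset.disjoint_left]
      rintro ⟨a, j⟩ ha hb
      simp only [hS1, Finset.mem_singleton, mem_image, Prod.mk.injEq] at ha hb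
      obtain ⟨k, _, hk1, hk2⟩ := hb
      omega
    have d02 : Disjoint (({((0:ℤ), (1:ℤ))} : Finset (ℤ × ℤ)) ∪ S1) S2 := by
      rw [Finset.disjoint_left]
      rintro ⟨a, j⟩ ha hb
      simp only [hS1, hS2, Finset.mem_union, Finset.mem_singleton, mem_image, mem_filter,
        Prod.mk.injEq] at ha hb
      obtain ⟨k, _, hk1, hk2⟩ := hb
      rcases ha with ⟨h, _⟩ | ⟨k', _, hk1', _⟩ <;> omega
    have d03 : Disjoint (({((0:ℤ), (1:ℤ))} : Finset (ℤ × ℤ)) ∪ S1 ∪ S2) S3 := by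
      rw [Finset.disjoint_left]
      rintro ⟨a, j⟩ ha hb
      simp only [hS1, hS2, hS3, Finset.mem_union, Finset.mem_singleton, mem_image, mem_filter,
        Prod.mk.injEq] at ha hb
      obtain ⟨k, _, hk1, hk2⟩ := hb
      rcases ha with (⟨h, _⟩ | ⟨k', _, hk1', _⟩) | ⟨k', _, hk1', _⟩ <;> omega
    rw [hF, Finset.card_union_of_disjoint d03, Finset.card_union_of_disjoint d02,
      Finset.card_union_of_disjoint d01, Finset.card_singleton, c1, c2, c3]
    push_cast
    ring
end

section
/- Let A = {a_1, …, a_n} ⊆ ℤ^r be a finite set such that every r×r determinant of r points from A has absolute value at most Δ, and let Q = conv(A ∪ (−A)). If C = conv{±a_{i_1}, …, ±a_{i_r}} is a crosspolytope of maximal volume among those with vertices ±points of A, then Q is contained in the parallelepiped W = {∑_{j=1}^r γ_j a_{i_j} : −1 ≤ γ_j ≤ 1}, and consequently vol(Q) ≤ 2^r · Δ. -/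
open MeasureTheory

/-- If every `r`-subset of `A ⊆ ℤ^r` has determinant at most `Δ` in absolute value and
`C = conv{±a_{i₁}, …, ±a_{i_r}}` is a crosspolytope of maximal volume with vertices among
`±A`, then `Q = conv(A ∪ −A)` is contained in the parallelepiped
`W = {∑ γ_j a_{i_j} : −1 ≤ γ_j ≤ 1}`, and `vol(Q) ≤ 2^r · Δ`. -/
theorem crosspolytope_parallelepiped_bound (r n : ℕ) (Δ : ℤ)
    (a : Fin n → (Fin r → ℤ))
    (hΔ : ∀ f : Fin r → Fin n, |(Matrix.of fun i j => a (f j) i).det| ≤ Δ)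
    (b : Fin r → Fin n)
    (hind : (Matrix.of fun i j => a (b j) i).det ≠ 0)
    (hmax : ∀ g : Fin r → Fin n,
      |(Matrix.of fun i j => a (g j) i).det| ≤ |(Matrix.of fun i j => a (b j) i).det|) :
    (convexHull ℝ (Set.range (fun i => fun k => (a i k : ℝ)) ∪
        Set.range (fun i => fun k => -(a i k : ℝ))) ⊆
      {x : Fin r → ℝ | ∃ γ : Fin r → ℝ, (∀ j, -1 ≤ γ j ∧ γ j ≤ 1) ∧
        x = ∑ j, γ j • (fun k => (a (b j) k : ℝ))}) ∧
    volume (convexHull ℝ (Set.range (fun i => fun k => (a i k : ℝ)) ∪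
        Set.range (fun i => fun k => -(a i k : ℝ)))) ≤
      ENNReal.ofReal (2 ^ r * (Δ : ℝ)) := by
  classical
  set N : Matrix (Fin r) (Fin r) ℤ := Matrix.of fun i j => a (b j) i with hN
  set M : Matrix (Fin r) (Fin r) ℝ := N.map (Int.cast : ℤ → ℝ) with hM
  have hdet : M.det = (N.det : ℝ) := by
    have := RingHom.map_det (Int.castRingHom ℝ) N
    simpa [RingHom.mapMatrix_apply] using this.symm
  have hdetne : M.det ≠ 0 := by
    rw [hdet]; exact_mod_cast hind
  have v : Fin r → (Fin r → ℝ) := fun j k => (a (b j) k : ℝ)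
  have hmv : ∀ γ : Fin r → ℝ, M.mulVec γ = ∑ j, γ j • (fun k => (a (b j) k : ℝ)) := by
    intro γ; funext k
    simp only [Matrix.mulVec, dotProduct, Finset.sum_apply, Pi.smul_apply,
      smul_eq_mul, hM, Matrix.map_apply, Matrix.of_apply, hN]
    exact Finset.sum_congr rfl fun j _ => mul_comm _ _
  -- key: every ±a i is in the parallelepiped
  have key : ∀ i : Fin n, ∃ γ : Fin r → ℝ, (∀ j, |γ j| ≤ 1) ∧
      M.mulVec γ = fun k => (a i k : ℝ) := by
    intro i
    set x : Fin r → ℝ := fun k => (a i k : ℝ) with hx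
    refine ⟨(M.det)⁻¹ • Matrix.cramer M x, ?_, ?_⟩
    · intro j
      have hcr : Matrix.cramer M x j
          = (((Matrix.of fun k j' => a (Function.update b j i j') k : Matrix (Fin r) (Fin r) ℤ)).det : ℝ) := by
        rw [Matrix.cramer_apply]
        have : M.updateCol j x
            = (Matrix.of fun k j' => a (Function.update b j i j') k : Matrix (Fin r) (Fin r) ℤ).map
              (Int.cast : ℤ → ℝ) := by
          ext k j'
          by_cases h : j' = j <;>
            simp [Matrix.updateCol_apply, h, hx, hM, hN, Function.update]
        rw [this]
        have := RingHom.map_det (Int.castRingHom ℝ)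
          (Matrix.of fun k j' => a (Function.update b j i j') k : Matrix (Fin r) (Fin r) ℤ)
        simpa [RingHom.mapMatrix_apply] using this.symm
      have hb : |((Matrix.of fun k j' => a (Function.update b j i j') k : Matrix (Fin r) (Fin r) ℤ)).det|
          ≤ |N.det| := hmax (Function.update b j i)
      have hbR : |Matrix.cramer M x j| ≤ |M.det| := by
        rw [hcr, hdet, ← Int.cast_abs, ← Int.cast_abs]
        exact_mod_cast hb
      have h2 : |M.det|⁻¹ * |Matrix.cramer M x j| ≤ |M.det|⁻¹ * |M.det| :=
        mul_le_mul_of_nonneg_left hbR (by positivity)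
      rw [inv_mul_cancel₀ (abs_ne_zero.mpr hdetne)] at h2
      calc |((M.det)⁻¹ • Matrix.cramer M x) j| = |M.det|⁻¹ * |Matrix.cramer M x j| := by
            simp [abs_mul, abs_inv]
        _ ≤ 1 := h2
    · rw [Matrix.mulVec_smul, Matrix.mulVec_cramer, smul_smul,
        inv_mul_cancel₀ hdetne, one_smul]
  set W : Set (Fin r → ℝ) :=
    {x : Fin r → ℝ | ∃ γ : Fin r → ℝ, (∀ j, -1 ≤ γ j ∧ γ j ≤ 1) ∧
      x = ∑ j, γ j • (fun k => (a (b j) k : ℝ))} with hW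
  set cube : Set (Fin r → ℝ) := Set.pi Set.univ (fun _ => Set.Icc (-1 : ℝ) 1) with hcube
  have hWimage : W = (Matrix.toLin' M) '' cube := by
    ext y
    constructor
    · rintro ⟨γ, hγ, rfl⟩
      exact ⟨γ, fun j _ => ⟨(hγ j).1, (hγ j).2⟩, by rw [Matrix.toLin'_apply, hmv]⟩
    · rintro ⟨γ, hγ, rfl⟩
      exact ⟨γ, fun j => ⟨(hγ j (Set.mem_univ j)).1, (hγ j (Set.mem_univ j)).2⟩,
        by rw [Matrix.toLin'_apply, hmv]⟩
  have hsub : convexHull ℝ (Set.range (fun i => fun k => (a i k : ℝ)) ∪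
      Set.range (fun i => fun k => -(a i k : ℝ))) ⊆ W := by
    apply convexHull_min
    · rintro x (⟨i, rfl⟩ | ⟨i, rfl⟩)
      · obtain ⟨γ, hγ, hγx⟩ := key i
        refine ⟨γ, fun j => abs_le.mp (hγ j), ?_⟩
        rw [← hmv]; exact hγx.symm
      · obtain ⟨γ, hγ, hγx⟩ := key i
        refine ⟨-γ, fun j => by simpa using abs_le.mp (by simpa using hγ j : |(-γ) j| ≤ 1), ?_⟩
        rw [← hmv, Matrix.mulVec_neg, hγx]
        funext k; simp
    · rw [hWimage]
      exact ((convex_pi fun i _ => convex_Icc _ _).linear_image (Matrix.toLin' M))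
  refine ⟨hsub, ?_⟩
  calc volume (convexHull ℝ (Set.range (fun i => fun k => (a i k : ℝ)) ∪
        Set.range (fun i => fun k => -(a i k : ℝ))))
      ≤ volume W := measure_mono hsub
    _ = ENNReal.ofReal |LinearMap.det (Matrix.toLin' M)| * volume cube := by
        rw [hWimage]; exact Measure.addHaar_image_linearMap volume _ _
    _ ≤ ENNReal.ofReal (2 ^ r * (Δ : ℝ)) := by
        have hcv : volume cube = ENNReal.ofReal (2 ^ r) := by
          rw [hcube, volume_pi_pi]
          simp [Real.volume_Icc]
          rw [← ENNReal.ofReal_pow (by norm_num)]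
          norm_num
        rw [hcv, LinearMap.det_toLin', ← ENNReal.ofReal_mul (abs_nonneg _), mul_comm]
        apply ENNReal.ofReal_le_ofReal
        apply mul_le_mul_of_nonneg_left _ (by positivity)
        rw [hdet, ← Int.cast_abs]
        exact_mod_cast hΔ b
end

section
/- Let A ⊆ ℤ^r be a finite set with rank r such that every r×r determinant of points from A is non-zero, let L = {x ∈ ℝ^r : x_r = 0}, and for ℓ ∈ ℤ \ {0} let C_ℓ = A ∩ (L + ℓ·e_r). If every r-subset of A has determinant of absolute value at most Δ, then the projection S_ℓ of C_ℓ onto the first r−1 coordinates is a set in ℤ^{r-1} such that every r points s_1,…,s_r ∈ S_ℓ satisfy 0 < |det(s_2−s_1, …, s_r−s_1)| ≤ Δ/|ℓ|. -/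
/-- Key determinant identity: column (row after transpose) operations plus Laplace
expansion along the last column show `|det M| = |ℓ| * |det small|`. -/
lemma slice_det_abs_eq (d : ℕ) (ℓ : ℤ) (c : Fin (d + 1) → (Fin (d + 1) → ℤ))
    (hlast : ∀ i, c i (Fin.last d) = ℓ) :
    |(Matrix.of fun i j => c j i).det| =
      |ℓ| * |(Matrix.of fun (j : Fin d) (k : Fin d) =>
        c k.succ j.castSucc - c 0 j.castSucc).det| := by
  set M : Matrix (Fin (d+1)) (Fin (d+1)) ℤ := Matrix.of fun i j => c j i
  set B : Matrix (Fin (d+1)) (Fin (d+1)) ℤ :=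
    Matrix.of fun i j => if i = 0 then c 0 j else c i j - c 0 j with hB
  have h1 : M.det = B.det := by
    rw [← Matrix.det_transpose M]
    apply Matrix.det_eq_of_forall_row_eq_smul_add_const
      (fun i => if i = 0 then 0 else 1) 0 (by simp)
    intro i j
    by_cases hi : i = 0 <;> simp [hi, hB, M]
  have h2 : B.det = (-1)^(d : ℕ) * ℓ *
      ((Matrix.of fun (j : Fin d) (k : Fin d) =>
        c k.succ j.castSucc - c 0 j.castSucc).det) := by
    rw [Matrix.det_succ_column B (Fin.last d)]
    rw [Fintype.sum_eq_single 0]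
    · have hs : (B.submatrix (Fin.succAbove 0) (Fin.succAbove (Fin.last d))).det =
          (Matrix.of fun (j : Fin d) (k : Fin d) =>
            c k.succ j.castSucc - c 0 j.castSucc).det := by
        rw [← Matrix.det_transpose]
        congr 1
        ext a b
        simp [hB, Fin.succAbove, Fin.lt_iff_val_lt_val, Fin.succ_ne_zero]
      rw [hs]
      simp [hB, hlast]
    · intro i hi
      have : B i (Fin.last d) = 0 := by
        simp [hB, hi, hlast, sub_self]
      simp [this]
  rw [h1, h2, abs_mul, abs_mul]
  simp [abs_pow]

/-- Let `A ⊆ ℤ^{d+1}` be a finite generic `Δ`-modular set of points (all `(d+1) × (d+1)`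
determinants of distinct points of `A` are non-zero with absolute value at most `Δ`).
If `c₁, …, c_{d+1}` are distinct points of `A` whose last coordinate equals `ℓ ≠ 0`, then
their projections `s₁, …, s_{d+1}` onto the first `d` coordinates satisfy
`0 < |det(s₂ − s₁, …, s_{d+1} − s₁)| ≤ Δ / |ℓ|`. -/
theorem slice_projection_volume_bound (d : ℕ) (Δ : ℤ) (A : Set (Fin (d + 1) → ℤ))
    (hfin : A.Finite)
    (hgen : ∀ c : Fin (d + 1) → (Fin (d + 1) → ℤ), (∀ i, c i ∈ A) →
      Function.Injective c → (Matrix.of fun i j => c j i).det ≠ 0)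
    (hmod : ∀ c : Fin (d + 1) → (Fin (d + 1) → ℤ), (∀ i, c i ∈ A) →
      Function.Injective c → |(Matrix.of fun i j => c j i).det| ≤ Δ)
    (ℓ : ℤ) (hℓ : ℓ ≠ 0)
    (c : Fin (d + 1) → (Fin (d + 1) → ℤ)) (hcA : ∀ i, c i ∈ A)
    (hcinj : Function.Injective c)
    (hlast : ∀ i, c i (Fin.last d) = ℓ) :
    0 < |(Matrix.of fun (j : Fin d) (k : Fin d) =>
        c k.succ j.castSucc - c 0 j.castSucc).det| ∧
    (|(Matrix.of fun (j : Fin d) (k : Fin d) =>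
        c k.succ j.castSucc - c 0 j.castSucc).det| : ℚ) ≤ (Δ : ℚ) / |(ℓ : ℚ)| := by
  have key := slice_det_abs_eq d ℓ c hlast
  have hne := hgen c hcA hcinj
  have hbd := hmod c hcA hcinj
  have hℓpos : (0 : ℤ) < |ℓ| := abs_pos.mpr hℓ
  have hspos : 0 < |(Matrix.of fun (j : Fin d) (k : Fin d) =>
      c k.succ j.castSucc - c 0 j.castSucc).det| := by
    rw [abs_pos]
    intro h0
    have hp := abs_pos.mpr hne
    rw [key, h0, abs_zero, mul_zero] at hp
    exact lt_irrefl 0 hp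
  refine ⟨hspos, ?_⟩
  have hℓQ : (0 : ℚ) < |(ℓ : ℚ)| := by
    rw [← Int.cast_abs]
    exact_mod_cast hℓpos
  rw [le_div_iff₀ hℓQ]
  have : |ℓ| * |(Matrix.of fun (j : Fin d) (k : Fin d) =>
      c k.succ j.castSucc - c 0 j.castSucc).det| ≤ Δ := key ▸ hbd
  calc (|(Matrix.of fun (j : Fin d) (k : Fin d) =>
        c k.succ j.castSucc - c 0 j.castSucc).det| : ℚ) * |(ℓ : ℚ)|
      = ((|ℓ| * |(Matrix.of fun (j : Fin d) (k : Fin d) =>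
        c k.succ j.castSucc - c 0 j.castSucc).det| : ℤ) : ℚ) := by
        push_cast [Int.cast_abs]
        ring
    _ ≤ (Δ : ℚ) := by exact_mod_cast this
end

section
/- For positive integers r and Δ with r ≥ 2 and r ≥ 2Δ − 1, the maximum number of columns of an integer matrix A ∈ ℤ^{r×n} of rank r, with pairwise distinct columns, such that every r×r minor of A is non-zero with absolute value at most Δ, equals r + 1. -/
private theorem g_mem_aux (r : ℕ) (Δ : ℤ) (hr : 2 ≤ r) (hΔ : 1 ≤ Δ) :
    ∃ A : Matrix (Fin r) (Fin (r+1)) ℤ,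
      Function.Injective (fun j => fun i => A i j) ∧
      A.rank = r ∧
      ∀ f : Fin r → Fin (r+1), Function.Injective f →
        (A.submatrix id f).det ≠ 0 ∧ |(A.submatrix id f).det| ≤ Δ := by
  set A : Matrix (Fin r) (Fin (r+1)) ℤ :=
    Matrix.of fun i j => if j = Fin.last r then Δ else if (i : ℕ) = (j : ℕ) then 1 else 0 with hA
  refine ⟨A, ?_, ?_, ?_⟩
  · -- injectivity of columns
    intro j1 j2 h
    by_contra hne
    have hfun : ∀ i, A i j1 = A i j2 := fun i => congrFun h i
    by_cases h1 : j1 = Fin.last r <;> by_cases h2 : j2 = Fin.last r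
    · exact hne (h1.trans h2.symm)
    · have hv2 : (j2 : ℕ) < r := lt_of_le_of_ne (Nat.lt_succ_iff.mp j2.isLt)
        (fun h => h2 (Fin.ext h))
      set i : Fin r := if (j2 : ℕ) = 0 then ⟨1, by omega⟩ else ⟨0, by omega⟩ with hi
      have hiv : (i : ℕ) ≠ (j2 : ℕ) := by
        rw [hi]; split_ifs with hc <;> simp [hc]
        omega
      have := hfun i
      rw [hA] at this
      simp only [Matrix.of_apply, if_pos h1, if_neg h2, if_neg hiv] at this
      omega
    · have hv1 : (j1 : ℕ) < r := lt_of_le_of_ne (Nat.lt_succ_iff.mp j1.isLt)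
        (fun h => h1 (Fin.ext h))
      set i : Fin r := if (j1 : ℕ) = 0 then ⟨1, by omega⟩ else ⟨0, by omega⟩ with hi
      have hiv : (i : ℕ) ≠ (j1 : ℕ) := by
        rw [hi]; split_ifs with hc <;> simp [hc]
        omega
      have := hfun i
      rw [hA] at this
      simp only [Matrix.of_apply, if_pos h2, if_neg h1, if_neg hiv] at this
      omega
    · have hv1 : (j1 : ℕ) < r := lt_of_le_of_ne (Nat.lt_succ_iff.mp j1.isLt)
        (fun h => h1 (Fin.ext h))
      have hvne : (j1 : ℕ) ≠ (j2 : ℕ) := fun h => hne (Fin.ext h)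
      have := hfun ⟨j1, hv1⟩
      rw [hA] at this
      simp only [Matrix.of_apply, if_neg h1, if_neg h2, if_pos rfl, if_neg hvne] at this
      exact one_ne_zero this
  · -- rank
    have hsub : A.submatrix id Fin.castSucc = (1 : Matrix (Fin r) (Fin r) ℤ) := by
      ext i k
      simp only [Matrix.submatrix_apply, id, hA, Matrix.of_apply, Matrix.one_apply]
      rw [if_neg (Fin.castSucc_lt_last k).ne]
      simp [Fin.ext_iff]
    have hmul : A.submatrix id Fin.castSucc
        = A * ((1 : Matrix (Fin (r+1)) (Fin (r+1)) ℤ).submatrix id Fin.castSucc) := by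
      ext i k
      simp [Matrix.mul_apply, Matrix.one_apply]
    refine le_antisymm ?_ ?_
    · simpa using A.rank_le_card_height
    · calc r = (1 : Matrix (Fin r) (Fin r) ℤ).rank := by simp [Matrix.rank_one]
        _ ≤ A.rank := by rw [← hsub, hmul]; exact Matrix.rank_mul_le_left _ _
  · -- minors
    intro f hf
    by_cases hlast : ∀ k, f k ≠ Fin.last r
    · have hv : ∀ k, (f k : ℕ) < r := fun k => lt_of_le_of_ne (Nat.lt_succ_iff.mp (f k).isLt)
        (fun h => hlast k (Fin.ext h))
      set σ' : Fin r → Fin r := fun k => ⟨f k, hv k⟩ with hσ'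
      have hinj : Function.Injective σ' := by
        intro k1 k2 h
        exact hf (by rw [Fin.ext_iff]; exact congrArg (Fin.val (n := r)) h)
      let σ : Equiv.Perm (Fin r) := Equiv.ofBijective σ' (Finite.injective_iff_bijective.mp hinj)
      have hEq : A.submatrix id f = (1 : Matrix (Fin r) (Fin r) ℤ).submatrix id σ := by
        ext i k
        simp only [Matrix.submatrix_apply, id, hA, Matrix.of_apply, Matrix.one_apply]
        rw [if_neg (hlast k)]
        have hσk : σ k = σ' k := rfl
        rw [hσk, hσ']
        simp [Fin.ext_iff]
      rw [hEq, Matrix.det_permute']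
      refine ⟨?_, ?_⟩ <;> rcases Int.units_eq_one_or (Equiv.Perm.sign σ) with h | h <;>
        simp [h] <;> linarith
    · push_neg at hlast
      obtain ⟨k0, hk0⟩ := hlast
      have hns : ¬ Function.Surjective f := by
        intro hs
        have := Fintype.card_le_of_surjective f hs
        simp at this
      rw [Function.Surjective] at hns
      push_neg at hns
      obtain ⟨m', hm'⟩ := hns
      have hm'last : m' ≠ Fin.last r := fun h => hm' k0 (h ▸ hk0)
      have hm'v : (m' : ℕ) < r := lt_of_le_of_ne (Nat.lt_succ_iff.mp m'.isLt)
        (fun h => hm'last (Fin.ext h))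
      set i₀ : Fin r := ⟨m', hm'v⟩ with hi₀
      have hcs : Fin.castSucc i₀ = m' := Fin.ext rfl
      have hvk : ∀ k, k ≠ k0 → (f k : ℕ) < r := fun k hk =>
        lt_of_le_of_ne (Nat.lt_succ_iff.mp (f k).isLt)
          (fun h => hk (hf ((Fin.ext h : f k = Fin.last r).trans hk0.symm)))
      set σ' : Fin r → Fin r := fun k => if h : k = k0 then i₀ else ⟨f k, hvk k h⟩ with hσ'
      have hd0 : σ' k0 = i₀ := dif_pos rfl
      have hd : ∀ k (hk : k ≠ k0), σ' k = ⟨f k, hvk k hk⟩ := fun k hk => dif_neg hk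
      have hinj : Function.Injective σ' := by
        intro k1 k2 h
        by_cases hc1 : k1 = k0 <;> by_cases hc2 : k2 = k0
        · rw [hc1, hc2]
        · exfalso
          subst hc1
          rw [hd0, hd k2 hc2] at h
          refine hm' k2 ?_
          rw [← hcs, Fin.ext_iff] at *
          simpa using h.symm
        · exfalso
          subst hc2
          rw [hd0, hd k1 hc1] at h
          refine hm' k1 ?_
          rw [← hcs, Fin.ext_iff] at *
          simpa using h
        · rw [hd k1 hc1, hd k2 hc2] at h
          rw [Fin.ext_iff] at h
          exact hf (by rw [Fin.ext_iff]; simpa using h)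
      let σ : Equiv.Perm (Fin r) := Equiv.ofBijective σ' (Finite.injective_iff_bijective.mp hinj)
      have hσ0 : σ k0 = i₀ := hd0
      have hσn : ∀ k (hk : k ≠ k0), σ k = ⟨f k, hvk k hk⟩ := hd
      set M₀ : Matrix (Fin r) (Fin r) ℤ :=
        (1 : Matrix (Fin r) (Fin r) ℤ).updateCol i₀ (fun _ => Δ) with hM₀
      have hdet₀ : M₀.det = Δ := by
        rw [hM₀, ← Matrix.cramer_apply, Matrix.cramer_one]
        rfl
      have hEq : A.submatrix id f = M₀.submatrix id σ := by
        ext i k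
        simp only [Matrix.submatrix_apply, id]
        by_cases hkc : k = k0
        · rw [hkc, hk0, hσ0, hM₀]
          simp [hA, Matrix.updateCol_self]
        · have hne : (⟨f k, hvk k hkc⟩ : Fin r) ≠ i₀ := fun h =>
            hm' k (by rw [← hcs, ← h]; exact Fin.ext rfl)
          rw [hσn k hkc, hM₀, Matrix.updateCol_ne hne]
          have hfkl : f k ≠ Fin.last r := fun h => (hvk k hkc).ne (congrArg Fin.val h)
          have hfkv : ((f k : Fin (r+1)) : ℕ) ≠ r := (hvk k hkc).ne
          simp [hA, hfkl, hfkv, Matrix.one_apply, Fin.ext_iff]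
      rw [hEq, Matrix.det_permute', hdet₀]
      have habs : |Δ| = Δ := abs_of_pos (by omega)
      refine ⟨?_, ?_⟩ <;> rcases Int.units_eq_one_or (Equiv.Perm.sign σ) with h | h <;>
          simp [h, habs] <;> omega


private theorem g_ub_aux (r n : ℕ) (Δ : ℤ) (hr : 2 ≤ r) (hΔ : 1 ≤ Δ) (hrΔ : 2 * Δ - 1 ≤ (r : ℤ))
    (A : Matrix (Fin r) (Fin n) ℤ)
    (hdet : ∀ f : Fin r → Fin n, Function.Injective f →
        (A.submatrix id f).det ≠ 0 ∧ |(A.submatrix id f).det| ≤ Δ) :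
    n ≤ r + 1 := by
  by_contra hcon
  push_neg at hcon
  set d := Δ.toNat with hddef
  have hd : (d : ℤ) = Δ := Int.toNat_of_nonneg (by omega)
  obtain ⟨p, pp, hp1, hp2⟩ := Nat.exists_prime_lt_and_le_two_mul d (by omega)
  have hdr : 2 * d ≤ r + 1 := by rw [← hd] at hrΔ; omega
  have hpr : p ≤ r := by
    by_cases hp2d : p = 2 * d
    · have hpe : p = 2 := (Nat.Prime.even_iff pp).mp ⟨d, by omega⟩
      omega
    · omega
  haveI : Fact p.Prime := ⟨pp⟩
  set c : Fin n → (Fin r → ZMod p) := fun j i => ((A i j : ℤ) : ZMod p) with hcdef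
  have hind : ∀ f : Fin r → Fin n, Function.Injective f →
      LinearIndependent (ZMod p) (fun k => c (f k)) := by
    intro f hf
    obtain ⟨h0, hle⟩ := hdet f hf
    set B : Matrix (Fin r) (Fin r) (ZMod p) :=
      (A.submatrix id f).map (Int.cast : ℤ → ZMod p) with hB
    have hBdet : B.det = (((A.submatrix id f).det : ℤ) : ZMod p) := by
      rw [hB]
      exact ((Int.castRingHom (ZMod p)).map_det _).symm
    have hBne : B.det ≠ 0 := by
      rw [hBdet]
      intro h
      rw [ZMod.intCast_zmod_eq_zero_iff_dvd] at h
      have h1 : (p : ℤ) ≤ |(A.submatrix id f).det| :=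
        Int.le_of_dvd (abs_pos.mpr h0) ((dvd_abs _ _).mpr h)
      have h2 : (d : ℤ) < p := by exact_mod_cast hp1
      linarith
    have hU : IsUnit B := (Matrix.isUnit_iff_isUnit_det B).mpr (isUnit_iff_ne_zero.mpr hBne)
    have hli := Matrix.linearIndependent_cols_iff_isUnit.mpr hU
    have hcol : (fun k => c (f k)) = (fun k => B.transpose k) := by
      funext k
      funext i
      simp [hcdef, hB, Matrix.transpose_apply, Matrix.map_apply]
    rw [hcol]
    exact hli
  have hfr : Fintype.card (Fin r) = Module.finrank (ZMod p) (Fin r → ZMod p) := by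
    simp [Module.finrank_fintype_fun_eq_card]
  set f0 : Fin r → Fin n := fun k => ⟨k, by have := k.isLt; omega⟩ with hf0def
  have hf0i : Function.Injective f0 := by
    intro k1 k2 h
    exact Fin.ext (congrArg (Fin.val (n := n)) h)
  have li0 := hind f0 hf0i
  haveI : Nonempty (Fin r) := ⟨⟨0, by omega⟩⟩
  let b : Module.Basis (Fin r) (ZMod p) (Fin r → ZMod p) :=
    basisOfLinearIndependentOfCardEqFinrank li0 hfr
  have hb : ⇑b = fun k => c (f0 k) := coe_basisOfLinearIndependentOfCardEqFinrank li0 hfr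
  -- Claim 1
  have claim1 : ∀ t : Fin n, r ≤ (t : ℕ) → ∀ i : Fin r, b.repr (c t) i ≠ 0 := by
    intro t ht i hzero
    set f : Fin r → Fin n := Function.update f0 i t with hfdef
    have hfi : f i = t := Function.update_self i t f0
    have hfn : ∀ k, k ≠ i → f k = f0 k := fun k hk => Function.update_of_ne hk t f0
    have hfinj : Function.Injective f := by
      intro k1 k2 h
      by_cases h1 : k1 = i <;> by_cases h2 : k2 = i
      · rw [h1, h2]
      · exfalso
        rw [h1, hfi, hfn k2 h2] at h
        have hv := congrArg (Fin.val (n := n)) h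
        have := k2.isLt
        simp [hf0def] at hv
        omega
      · exfalso
        rw [h2, hfi, hfn k1 h1] at h
        have hv := congrArg (Fin.val (n := n)) h
        have := k1.isLt
        simp [hf0def] at hv
        omega
      · rw [hfn k1 h1, hfn k2 h2] at h
        exact hf0i h
    have li := hind f hfinj
    rw [Fintype.linearIndependent_iff] at li
    set g : Fin r → ZMod p := Function.update (fun k => b.repr (c t) k) i (-1) with hgdef
    have hgi : g i = -1 := Function.update_self _ _ _
    have hgn : ∀ k, k ≠ i → g k = b.repr (c t) k := fun k hk => Function.update_of_ne hk _ _
    have hsum : ∑ k, g k • c (f k) = 0 := by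
      have h1 : ∑ k ∈ Finset.univ.erase i, g k • c (f k)
          = ∑ k ∈ Finset.univ.erase i, b.repr (c t) k • b k := by
        refine Finset.sum_congr rfl fun k hk => ?_
        have hki : k ≠ i := Finset.ne_of_mem_erase hk
        rw [hgn k hki, hfn k hki, hb]
      have h2 : ∑ k ∈ Finset.univ.erase i, b.repr (c t) k • b k = c t := by
        have h3 : ∑ k ∈ Finset.univ.erase i, b.repr (c t) k • b k + b.repr (c t) i • b i
            = ∑ k, b.repr (c t) k • b k := Finset.sum_erase_add _ _ (Finset.mem_univ i)
        rw [Module.Basis.sum_repr, hzero, zero_smul, add_zero] at h3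
        exact h3
      calc ∑ k, g k • c (f k)
          = ∑ k ∈ Finset.univ.erase i, g k • c (f k) + g i • c (f i) :=
            (Finset.sum_erase_add _ _ (Finset.mem_univ i)).symm
        _ = c t + (-1 : ZMod p) • c t := by rw [h1, h2, hgi, hfi]
        _ = 0 := by simp
    have hgi0 := li g hsum i
    rw [hgi] at hgi0
    simp at hgi0
  set t1 : Fin n := ⟨r, by omega⟩ with ht1def
  set t2 : Fin n := ⟨r + 1, by omega⟩ with ht2def
  set a : Fin r → ZMod p := fun i => b.repr (c t1) i with hadef
  set e : Fin r → ZMod p := fun i => b.repr (c t2) i with hedef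
  have ha : ∀ i, a i ≠ 0 := fun i => claim1 t1 (le_refl r) i
  have he : ∀ i, e i ≠ 0 := fun i => claim1 t2 (Nat.le_succ r) i
  have hs1 : ∑ k, a k • b k = c t1 := by
    simp only [hadef]
    exact b.sum_repr (c t1)
  have hs2 : ∑ k, e k • b k = c t2 := by
    simp only [hedef]
    exact b.sum_repr (c t2)
  -- Claim 2
  have claim2 : ∀ i j : Fin r, i ≠ j → e i * a j ≠ a i * e j := by
    intro i j hij heq
    set f : Fin r → Fin n := Function.update (Function.update f0 i t1) j t2 with hfdef
    have hfi : f i = t1 := by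
      rw [hfdef, Function.update_of_ne hij, Function.update_self]
    have hfj : f j = t2 := Function.update_self _ _ _
    have hfn : ∀ k, k ≠ i → k ≠ j → f k = f0 k := fun k hki hkj => by
      rw [hfdef, Function.update_of_ne hkj, Function.update_of_ne hki]
    have hfinj : Function.Injective f := by
      have hvals : ∀ k : Fin r, ((f k : Fin n) : ℕ)
          = if (k : ℕ) = (j : ℕ) then r + 1 else if (k : ℕ) = (i : ℕ) then r else (k : ℕ) := by
        intro k
        by_cases hkj : k = j
        · subst hkj
          rw [hfj]
          simp [ht2def]
        · have hkj' : (k : ℕ) ≠ (j : ℕ) := fun hh => hkj (Fin.ext hh)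
          by_cases hki : k = i
          · subst hki
            rw [hfi]
            simp [ht1def, hkj']
          · have hki' : (k : ℕ) ≠ (i : ℕ) := fun hh => hki (Fin.ext hh)
            rw [hfn k hki hkj]
            simp [hf0def, hkj', hki']
      intro k1 k2 h
      have h' := congrArg (Fin.val (n := n)) h
      rw [hvals k1, hvals k2] at h'
      have hk1 := k1.isLt
      have hk2 := k2.isLt
      apply Fin.ext
      split_ifs at h' <;> omega
    have li := hind f hfinj
    rw [Fintype.linearIndependent_iff] at li
    set g : Fin r → ZMod p :=
      Function.update (Function.update (fun k => -(e i * a k - a i * e k)) i (e i)) j (-(a i))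
      with hgdef
    have hgi : g i = e i := by
      rw [hgdef, Function.update_of_ne hij, Function.update_self]
    have hgj : g j = -(a i) := Function.update_self _ _ _
    have hgn : ∀ k, k ≠ i → k ≠ j → g k = -(e i * a k - a i * e k) := fun k hki hkj => by
      rw [hgdef, Function.update_of_ne hkj, Function.update_of_ne hki]
    have key : ∑ k, (e i * a k - a i * e k) • b k = e i • c t1 - a i • c t2 := by
      have h1 : ∀ k : Fin r, (e i * a k - a i * e k) • b k
          = e i • (a k • b k) - a i • (e k • b k) := by
        intro k
        rw [sub_smul, mul_smul, mul_smul]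
      simp_rw [h1]
      rw [Finset.sum_sub_distrib, ← Finset.smul_sum, ← Finset.smul_sum, hs1, hs2]
    have hzi : e i * a i - a i * e i = 0 := by ring
    have hzj : e i * a j - a i * e j = 0 := sub_eq_zero.mpr heq
    have hjmem : j ∈ Finset.univ.erase i := Finset.mem_erase.mpr ⟨Ne.symm hij, Finset.mem_univ _⟩
    have hsum : ∑ k, g k • c (f k) = 0 := by
      have hsplit : ∑ k, g k • c (f k) =
          ∑ k ∈ (Finset.univ.erase i).erase j, g k • c (f k) + g j • c (f j) + g i • c (f i) := by
        rw [Finset.sum_erase_add _ _ hjmem, Finset.sum_erase_add _ _ (Finset.mem_univ i)]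
      have e1 : ∑ k ∈ (Finset.univ.erase i).erase j, g k • c (f k)
          = ∑ k ∈ (Finset.univ.erase i).erase j, (-(e i * a k - a i * e k)) • b k := by
        refine Finset.sum_congr rfl fun k hk => ?_
        have hkj : k ≠ j := (Finset.mem_erase.mp hk).1
        have hki : k ≠ i := (Finset.mem_erase.mp (Finset.mem_erase.mp hk).2).1
        rw [hgn k hki hkj, hfn k hki hkj, hb]
      have e2 : ∑ k ∈ (Finset.univ.erase i).erase j, (-(e i * a k - a i * e k)) • b k
          = ∑ k : Fin r, (-(e i * a k - a i * e k)) • b k := by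
        refine Finset.sum_subset (Finset.subset_univ _) fun x _ hx => ?_
        by_cases hxj : x = j
        · subst hxj
          rw [hzj, neg_zero, zero_smul]
        · have hxi : x = i := by
            by_contra hxi
            exact hx (Finset.mem_erase.mpr ⟨hxj, Finset.mem_erase.mpr ⟨hxi, Finset.mem_univ _⟩⟩)
          subst hxi
          rw [hzi, neg_zero, zero_smul]
      have e3 : ∑ k : Fin r, (-(e i * a k - a i * e k)) • b k
          = -(e i • c t1 - a i • c t2) := by
        simp_rw [neg_smul]
        rw [Finset.sum_neg_distrib, key]
      rw [hsplit, e1, e2, e3, hgi, hgj, hfi, hfj]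
      simp [neg_smul]
      abel
    have hgi0 := li g hsum i
    rw [hgi] at hgi0
    exact he i hgi0
  -- pigeonhole
  set ρ : Fin r → ZMod p := fun i => e i * (a i)⁻¹ with hρdef
  have hmap : ∀ i : Fin r, i ∈ Finset.univ → ρ i ∈ (Finset.univ : Finset (ZMod p)).erase 0 := by
    intro i _
    refine Finset.mem_erase.mpr ⟨?_, Finset.mem_univ _⟩
    simp only [hρdef]
    exact mul_ne_zero (he i) (inv_ne_zero (ha i))
  have hcard : ((Finset.univ : Finset (ZMod p)).erase 0).card
      < (Finset.univ : Finset (Fin r)).card := by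
    rw [Finset.card_erase_of_mem (Finset.mem_univ _), Finset.card_univ, Finset.card_univ,
      ZMod.card, Fintype.card_fin]
    have := pp.two_le
    omega
  obtain ⟨i, _, j, _, hij, hρ⟩ := Finset.exists_ne_map_eq_of_card_lt_of_maps_to hcard hmap
  apply claim2 i j hij
  simp only [hρdef] at hρ
  have hai := ha i
  have haj := ha j
  field_simp at hρ
  linear_combination hρ


/-- For `r ≥ 2`, `Δ ≥ 1` and `r ≥ 2Δ − 1`, the maximum number of pairwise distinct
columns of a rank-`r` integer matrix all of whose `r × r` minors are non-zero with
absolute value at most `Δ` is exactly `r + 1`. -/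
theorem g_eq_r_add_one (r : ℕ) (Δ : ℤ) (hr : 2 ≤ r) (hΔ : 1 ≤ Δ)
    (hrΔ : 2 * Δ - 1 ≤ (r : ℤ)) :
    IsGreatest {n : ℕ | ∃ A : Matrix (Fin r) (Fin n) ℤ,
      Function.Injective (fun j => fun i => A i j) ∧
      A.rank = r ∧
      ∀ f : Fin r → Fin n, Function.Injective f →
        (A.submatrix id f).det ≠ 0 ∧ |(A.submatrix id f).det| ≤ Δ} (r + 1) := by
  constructor
  · exact g_mem_aux r Δ hr hΔ
  · rintro n ⟨A, -, -, hdet⟩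
    exact g_ub_aux r n Δ hr hΔ hrΔ A hdet
end
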